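/- Let X, Y, M_A, M_B, R_AC, R_BC be random variables taking values in finite sets on a common probability space such that: R_BC is independent of the triple (X, M_A, R_AC); R_AC is independent of the triple (Y, M_B, R_BC); and the following conditional independences (Markov chains) hold: I(Y; M_A | X, R_AC, R_BC) = 0, I(X; M_B | Y, M_A, R_AC, R_BC) = 0, and I(M_A; M_B | Y, R_AC, R_BC) = 0. Then I(X,Y; M_A,M_B | R_AC,R_BC) = I(X; M_A | R_AC) + I(Y; M_B | R_BC) − I(M_A; M_B | R_AC, R_BC). -/

import Mathlib

open scoped BigOperators
open scoped Classical

noncomputable section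

/-- A probability distribution on a finite type. -/
structure FinDist (Ω : Type) [Fintype Ω] where
  prob : Ω → ℝ
  nonneg : ∀ ω, 0 ≤ prob ω
  sum_one : ∑ ω, prob ω = 1

namespace FinDist

variable {Ω Ω' : Type} [Fintype Ω] [Fintype Ω']

/-- Product of two distributions (independent draw). -/
def prod (p : FinDist Ω) (q : FinDist Ω') : FinDist (Ω × Ω') where
  prob := fun ω => p.prob ω.1 * q.prob ω.2
  nonneg := fun ω => mul_nonneg (p.nonneg _) (q.nonneg _)
  sum_one := by
    rw [Fintype.sum_prod_type]
    have h : ∀ a : Ω, ∑ b : Ω', p.prob a * q.prob b = p.prob a := by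
      intro a; rw [← Finset.mul_sum, q.sum_one, mul_one]
    simp_rw [h]
    exact p.sum_one

/-- Probability of an event. -/
def probEvent (p : FinDist Ω) (E : Ω → Prop) : ℝ :=
  ∑ ω, if E ω then p.prob ω else 0

/-- Probability that a random variable takes a given value. -/
def probVal {α : Type*} (p : FinDist Ω) (A : Ω → α) (a : α) : ℝ :=
  probEvent p (fun ω => A ω = a)

/-- Shannon entropy (in bits) of a random variable on a finite probability space. -/
def entropy {α : Type*} (p : FinDist Ω) (A : Ω → α) : ℝ :=
  ∑ a ∈ Finset.univ.image A, -(probVal p A a * Real.logb 2 (probVal p A a))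

/-- Mutual information (in bits) I(A;B). -/
def mutualInfo {α β : Type*} (p : FinDist Ω) (A : Ω → α) (B : Ω → β) : ℝ :=
  entropy p A + entropy p B - entropy p (fun ω => (A ω, B ω))

/-- Conditional mutual information (in bits) I(A;B|C). -/
def condMutualInfo {α β γ : Type*} (p : FinDist Ω) (A : Ω → α) (B : Ω → β) (C : Ω → γ) : ℝ :=
  entropy p (fun ω => (A ω, C ω)) + entropy p (fun ω => (B ω, C ω))
    - entropy p (fun ω => (A ω, B ω, C ω)) - entropy p C

/-- Independence of two random variables. -/
def Indep {α β : Type*} (p : FinDist Ω) (A : Ω → α) (B : Ω → β) : Prop :=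
  ∀ a b, probEvent p (fun ω => A ω = a ∧ B ω = b) = probVal p A a * probVal p B b

end FinDist

/-- log₂(e). -/
def log2e : ℝ := Real.logb 2 (Real.exp 1)

def g1 (x : ℝ) : ℝ := 2 * Real.logb 2 (x + 1) + 10

def g2 (x y z : ℝ) : ℝ := 2 * Real.logb 2 (2 * (x + y) / (z ^ 2 * log2e) + 1) + 2

def g3 (x : ℝ) : ℝ := 2 * (1 / 2 - x) ^ 2 * log2e

/-- A private-coin SMP protocol for computing functions f : X × Y → Z. -/
structure PrivSMP (X Y Z : Type) [Fintype X] [Fintype Y] [Fintype Z] where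
  MA : Type
  MB : Type
  RA : Type
  RB : Type
  RC : Type
  [fMA : Fintype MA]
  [fMB : Fintype MB]
  [fRA : Fintype RA]
  [fRB : Fintype RB]
  [fRC : Fintype RC]
  [neMA : Nonempty MA]
  [neMB : Nonempty MB]
  [neRA : Nonempty RA]
  [neRB : Nonempty RB]
  [neRC : Nonempty RC]
  dRA : FinDist RA
  dRB : FinDist RB
  dRC : FinDist RC
  pA : X → RA → MA
  pB : Y → RB → MB
  pC : MA → MB → RC → Z

attribute [instance] PrivSMP.fMA PrivSMP.fMB PrivSMP.fRA PrivSMP.fRB PrivSMP.fRC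
attribute [instance] PrivSMP.neMA PrivSMP.neMB PrivSMP.neRA PrivSMP.neRB PrivSMP.neRC

namespace PrivSMP

variable {X Y Z : Type} [Fintype X] [Fintype Y] [Fintype Z]

/-- Joint distribution of all the (independent) randomness of the protocol,
ordered as (r_A, r_B, r_C). -/
def randDist (P : PrivSMP X Y Z) : FinDist (P.RA × P.RB × P.RC) :=
  P.dRA.prod (P.dRB.prod P.dRC)

/-- Probability of error on input (x, y). -/
def err (P : PrivSMP X Y Z) (f : X → Y → Z) (x : X) (y : Y) : ℝ :=
  FinDist.probEvent P.randDist (fun r => P.pC (P.pA x r.1) (P.pB y r.2.1) r.2.2 ≠ f x y)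

/-- The protocol computes f with worst-case error at most ε. -/
def Computes (P : PrivSMP X Y Z) (f : X → Y → Z) (ε : ℝ) : Prop :=
  ∀ x y, P.err f x y ≤ ε

/-- Communication cost ⌈log₂|M_A|⌉ + ⌈log₂|M_B|⌉. -/
def CC (P : PrivSMP X Y Z) : ℝ :=
  (⌈Real.logb 2 (Fintype.card P.MA)⌉ : ℝ) + (⌈Real.logb 2 (Fintype.card P.MB)⌉ : ℝ)

end PrivSMP

/-- Private-coin communication complexity of f with error ε. -/
def CCprivf {X Y Z : Type} [Fintype X] [Fintype Y] [Fintype Z]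
    (f : X → Y → Z) (ε : ℝ) : ℝ :=
  sInf {c : ℝ | ∃ P : PrivSMP X Y Z, P.Computes f ε ∧ P.CC = c}

/-- A shared-randomness SMP protocol for computing functions f : X × Y → Z. -/
structure ShSMP (X Y Z : Type) [Fintype X] [Fintype Y] [Fintype Z] where
  MA : Type
  MB : Type
  RA : Type
  RB : Type
  RC : Type
  RAC : Type
  RBC : Type
  [fMA : Fintype MA]
  [fMB : Fintype MB]
  [fRA : Fintype RA]
  [fRB : Fintype RB]
  [fRC : Fintype RC]
  [fRAC : Fintype RAC]
  [fRBC : Fintype RBC]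
  [neMA : Nonempty MA]
  [neMB : Nonempty MB]
  [neRA : Nonempty RA]
  [neRB : Nonempty RB]
  [neRC : Nonempty RC]
  [neRAC : Nonempty RAC]
  [neRBC : Nonempty RBC]
  dRA : FinDist RA
  dRB : FinDist RB
  dRC : FinDist RC
  dRAC : FinDist RAC
  dRBC : FinDist RBC
  pA : X → RA → RAC → MA
  pB : Y → RB → RBC → MB
  pC : MA → MB → RC → RAC → RBC → Z

attribute [instance] ShSMP.fMA ShSMP.fMB ShSMP.fRA ShSMP.fRB ShSMP.fRC ShSMP.fRAC ShSMP.fRBC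
attribute [instance] ShSMP.neMA ShSMP.neMB ShSMP.neRA ShSMP.neRB ShSMP.neRC ShSMP.neRAC
  ShSMP.neRBC

namespace ShSMP

variable {X Y Z : Type} [Fintype X] [Fintype Y] [Fintype Z]

/-- Joint distribution of all the (independent) randomness of the protocol,
ordered as (r_A, r_B, r_C, r_AC, r_BC). -/
def randDist (P : ShSMP X Y Z) : FinDist (P.RA × P.RB × P.RC × P.RAC × P.RBC) :=
  P.dRA.prod (P.dRB.prod (P.dRC.prod (P.dRAC.prod P.dRBC)))

/-- Probability of error on input (x, y). -/
def err (P : ShSMP X Y Z) (f : X → Y → Z) (x : X) (y : Y) : ℝ :=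
  FinDist.probEvent P.randDist
    (fun r => P.pC (P.pA x r.1 r.2.2.2.1) (P.pB y r.2.1 r.2.2.2.2) r.2.2.1 r.2.2.2.1 r.2.2.2.2
      ≠ f x y)

/-- The protocol computes f with worst-case error at most ε. -/
def Computes (P : ShSMP X Y Z) (f : X → Y → Z) (ε : ℝ) : Prop :=
  ∀ x y, P.err f x y ≤ ε

/-- Communication cost ⌈log₂|M_A|⌉ + ⌈log₂|M_B|⌉. -/
def CC (P : ShSMP X Y Z) : ℝ :=
  (⌈Real.logb 2 (Fintype.card P.MA)⌉ : ℝ) + (⌈Real.logb 2 (Fintype.card P.MB)⌉ : ℝ)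

/-- The underlying probability space when the input pair is drawn from μ, independently
of all the randomness of the protocol. A sample point is
((x, y), (r_A, r_B, r_C, r_AC, r_BC)). -/
def space (P : ShSMP X Y Z) (μ : FinDist (X × Y)) :
    FinDist ((X × Y) × (P.RA × P.RB × P.RC × P.RAC × P.RBC)) :=
  μ.prod P.randDist

/-- Alice's message as a random variable. -/
def rvMA (P : ShSMP X Y Z) (ω : (X × Y) × (P.RA × P.RB × P.RC × P.RAC × P.RBC)) : P.MA :=
  P.pA ω.1.1 ω.2.1 ω.2.2.2.2.1

/-- Bob's message as a random variable. -/
def rvMB (P : ShSMP X Y Z) (ω : (X × Y) × (P.RA × P.RB × P.RC × P.RAC × P.RBC)) : P.MB :=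
  P.pB ω.1.2 ω.2.2.1 ω.2.2.2.2.2

/-- The referee's private randomness as a random variable. -/
def rvRC (P : ShSMP X Y Z) (ω : (X × Y) × (P.RA × P.RB × P.RC × P.RAC × P.RBC)) : P.RC :=
  ω.2.2.2.1

/-- The Alice–referee shared randomness as a random variable. -/
def rvRAC (P : ShSMP X Y Z) (ω : (X × Y) × (P.RA × P.RB × P.RC × P.RAC × P.RBC)) : P.RAC :=
  ω.2.2.2.2.1

/-- The Bob–referee shared randomness as a random variable. -/
def rvRBC (P : ShSMP X Y Z) (ω : (X × Y) × (P.RA × P.RB × P.RC × P.RAC × P.RBC)) : P.RBC :=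
  ω.2.2.2.2.2

/-- Information leakage of the protocol on input distribution μ :
IL(Π,μ) = I(XY ; M_A M_B R_C R_AC R_BC). -/
def IL (P : ShSMP X Y Z) (μ : FinDist (X × Y)) : ℝ :=
  FinDist.mutualInfo (P.space μ) (fun ω => ω.1)
    (fun ω => (P.rvMA ω, P.rvMB ω, P.rvRC ω, P.rvRAC ω, P.rvRBC ω))

/-- Worst-case (over input distributions) information leakage IL(Π). -/
def ILmax (P : ShSMP X Y Z) : ℝ :=
  ⨆ μ : FinDist (X × Y), P.IL μ

/-- Information complexity of the protocol on input distribution μ :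
IC(Π,μ) = I(X ; M_A | R_AC) + I(Y ; M_B | R_BC). -/
def IC (P : ShSMP X Y Z) (μ : FinDist (X × Y)) : ℝ :=
  FinDist.condMutualInfo (P.space μ) (fun ω => ω.1.1) (fun ω => P.rvMA ω) (fun ω => P.rvRAC ω)
    + FinDist.condMutualInfo (P.space μ) (fun ω => ω.1.2) (fun ω => P.rvMB ω)
      (fun ω => P.rvRBC ω)

/-- Worst-case (over input distributions) information complexity IC(Π). -/
def ICmax (P : ShSMP X Y Z) : ℝ :=
  ⨆ μ : FinDist (X × Y), P.IC μ

end ShSMP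

/-- Shared-randomness communication complexity of f with error ε. -/
def CCshf {X Y Z : Type} [Fintype X] [Fintype Y] [Fintype Z]
    (f : X → Y → Z) (ε : ℝ) : ℝ :=
  sInf {c : ℝ | ∃ P : ShSMP X Y Z, P.Computes f ε ∧ P.CC = c}

/-- Information leakage for computing f with error ε. -/
def ILf {X Y Z : Type} [Fintype X] [Fintype Y] [Fintype Z]
    (f : X → Y → Z) (ε : ℝ) : ℝ :=
  sInf {c : ℝ | ∃ P : ShSMP X Y Z, P.Computes f ε ∧ P.ILmax = c}

/-- Information complexity for computing f with error ε. -/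
def ICf {X Y Z : Type} [Fintype X] [Fintype Y] [Fintype Z]
    (f : X → Y → Z) (ε : ℝ) : ℝ :=
  sInf {c : ℝ | ∃ P : ShSMP X Y Z, P.Computes f ε ∧ P.ICmax = c}

/-- An average-length SMP protocol: a shared-randomness SMP protocol whose (countable)
message sets carry length functions satisfying Kraft's inequality. -/
structure AvgSMP (X Y Z : Type) [Fintype X] [Fintype Y] [Fintype Z] where
  MA : Type
  MB : Type
  RA : Type
  RB : Type
  RC : Type
  RAC : Type
  RBC : Type
  [cMA : Countable MA]
  [cMB : Countable MB]
  [neMA : Nonempty MA]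
  [neMB : Nonempty MB]
  [fRA : Fintype RA]
  [fRB : Fintype RB]
  [fRC : Fintype RC]
  [fRAC : Fintype RAC]
  [fRBC : Fintype RBC]
  [neRA : Nonempty RA]
  [neRB : Nonempty RB]
  [neRC : Nonempty RC]
  [neRAC : Nonempty RAC]
  [neRBC : Nonempty RBC]
  lA : MA → ℕ
  lB : MB → ℕ
  kraftA : ∑' m : MA, ((2 : ℝ) ^ lA m)⁻¹ ≤ 1
  kraftB : ∑' m : MB, ((2 : ℝ) ^ lB m)⁻¹ ≤ 1
  dRA : FinDist RA
  dRB : FinDist RB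
  dRC : FinDist RC
  dRAC : FinDist RAC
  dRBC : FinDist RBC
  pA : X → RA → RAC → MA
  pB : Y → RB → RBC → MB
  pC : MA → MB → RC → RAC → RBC → Z

attribute [instance] AvgSMP.cMA AvgSMP.cMB AvgSMP.neMA AvgSMP.neMB
attribute [instance] AvgSMP.fRA AvgSMP.fRB AvgSMP.fRC AvgSMP.fRAC AvgSMP.fRBC
attribute [instance] AvgSMP.neRA AvgSMP.neRB AvgSMP.neRC AvgSMP.neRAC AvgSMP.neRBC

namespace AvgSMP

variable {X Y Z : Type} [Fintype X] [Fintype Y] [Fintype Z]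

/-- Joint distribution of all the (independent) randomness of the protocol,
ordered as (r_A, r_B, r_C, r_AC, r_BC). -/
def randDist (P : AvgSMP X Y Z) : FinDist (P.RA × P.RB × P.RC × P.RAC × P.RBC) :=
  P.dRA.prod (P.dRB.prod (P.dRC.prod (P.dRAC.prod P.dRBC)))

/-- Probability of error on input (x, y). -/
def err (P : AvgSMP X Y Z) (f : X → Y → Z) (x : X) (y : Y) : ℝ :=
  FinDist.probEvent P.randDist
    (fun r => P.pC (P.pA x r.1 r.2.2.2.1) (P.pB y r.2.1 r.2.2.2.2) r.2.2.1 r.2.2.2.1 r.2.2.2.2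
      ≠ f x y)

/-- The protocol computes f with worst-case error at most ε. -/
def Computes (P : AvgSMP X Y Z) (f : X → Y → Z) (ε : ℝ) : Prop :=
  ∀ x y, P.err f x y ≤ ε

/-- Average communication cost on input (x, y): E[ℓ_A(M_A) + ℓ_B(M_B)]. -/
def CCavOn (P : AvgSMP X Y Z) (x : X) (y : Y) : ℝ :=
  ∑ r : P.RA × P.RB × P.RC × P.RAC × P.RBC, P.randDist.prob r *
    ((P.lA (P.pA x r.1 r.2.2.2.1) : ℝ) + (P.lB (P.pB y r.2.1 r.2.2.2.2) : ℝ))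

/-- Average communication cost of the protocol (worst case over inputs). -/
def CCav (P : AvgSMP X Y Z) : ℝ :=
  ⨆ xy : X × Y, P.CCavOn xy.1 xy.2

/-- The underlying probability space when the input pair is drawn from μ. -/
def space (P : AvgSMP X Y Z) (μ : FinDist (X × Y)) :
    FinDist ((X × Y) × (P.RA × P.RB × P.RC × P.RAC × P.RBC)) :=
  μ.prod P.randDist

/-- Information complexity of the protocol on input distribution μ :
IC(Π,μ) = I(X ; M_A | R_AC) + I(Y ; M_B | R_BC). -/
def IC (P : AvgSMP X Y Z) (μ : FinDist (X × Y)) : ℝ :=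
  FinDist.condMutualInfo (P.space μ) (fun ω => ω.1.1)
      (fun ω => P.pA ω.1.1 ω.2.1 ω.2.2.2.2.1) (fun ω => ω.2.2.2.2.1)
    + FinDist.condMutualInfo (P.space μ) (fun ω => ω.1.2)
      (fun ω => P.pB ω.1.2 ω.2.2.1 ω.2.2.2.2.2) (fun ω => ω.2.2.2.2.2)

/-- Worst-case (over input distributions) information complexity. -/
def ICmax (P : AvgSMP X Y Z) : ℝ :=
  ⨆ μ : FinDist (X × Y), P.IC μ

end AvgSMP

/-- Average-length communication complexity of f with error ε. -/
def CCavf {X Y Z : Type} [Fintype X] [Fintype Y] [Fintype Z]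
    (f : X → Y → Z) (ε : ℝ) : ℝ :=
  sInf {c : ℝ | ∃ P : AvgSMP X Y Z, P.Computes f ε ∧ P.CCav = c}

/-- The equality function on n-bit strings. -/
def EQfun (n : ℕ) : (Fin n → Bool) → (Fin n → Bool) → Bool :=
  fun x y => decide (x = y)

end

section AuxIL

namespace FinDist

variable {Ω : Type} [Fintype Ω] {α β γ : Type*}

lemma probEvent_congr' (p : FinDist Ω) {E F : Ω → Prop} (h : ∀ ω, E ω ↔ F ω) :
    probEvent p E = probEvent p F :=
  Finset.sum_congr rfl fun ω _ => by simp only [h ω]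

lemma probVal_nonneg' (p : FinDist Ω) (A : Ω → α) (a : α) : 0 ≤ probVal p A a :=
  Finset.sum_nonneg fun ω _ => by
    dsimp only
    split
    · exact p.nonneg ω
    · exact le_refl 0

lemma sum_probVal (p : FinDist Ω) (A : Ω → α) :
    ∑ a ∈ Finset.univ.image A, probVal p A a = 1 := by
  unfold probVal probEvent
  rw [Finset.sum_comm]
  have : ∀ ω : Ω, (∑ a ∈ Finset.univ.image A, if A ω = a then p.prob ω else 0)
      = p.prob ω := by
    intro ω
    rw [Finset.sum_ite_eq]
    simp [Finset.mem_image]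
  simp_rw [this]
  exact p.sum_one

/-- Entropy is invariant under mutually-invertible recodings. -/
lemma entropy_eq_of_maps (p : FinDist Ω) (A : Ω → α) (B : Ω → β) (f : α → β) (g : β → α)
    (hf : ∀ ω, f (A ω) = B ω) (hg : ∀ ω, g (B ω) = A ω) :
    entropy p A = entropy p B := by
  unfold entropy
  have hval : ∀ a ∈ Finset.univ.image A, probVal p A a = probVal p B (f a) := by
    intro a ha
    obtain ⟨ω₀, _, hω₀⟩ := Finset.mem_image.mp ha
    apply probEvent_congr'
    intro ω
    constructor
    · intro h'; rw [← hf ω, h']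
    · intro hb
      have h1 : A ω = g (f a) := by rw [← hb, hg]
      have h2 : g (f a) = a := by rw [← hω₀, hf ω₀, hg]
      rw [h1, h2]
  refine Finset.sum_nbij' (i := f) (j := g) ?_ ?_ ?_ ?_ ?_
  · intro a ha
    obtain ⟨ω₀, _, hω₀⟩ := Finset.mem_image.mp ha
    exact Finset.mem_image.mpr ⟨ω₀, Finset.mem_univ _, by rw [← hω₀, hf]⟩
  · intro b hb
    obtain ⟨ω₀, _, hω₀⟩ := Finset.mem_image.mp hb
    exact Finset.mem_image.mpr ⟨ω₀, Finset.mem_univ _, by rw [← hω₀, hg]⟩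
  · intro a ha
    obtain ⟨ω₀, _, hω₀⟩ := Finset.mem_image.mp ha
    rw [← hω₀, hf, hg]
  · intro b hb
    obtain ⟨ω₀, _, hω₀⟩ := Finset.mem_image.mp hb
    rw [← hω₀, hg, hf]
  · intro a ha
    rw [hval a ha]

lemma Indep.symm' {p : FinDist Ω} {A : Ω → α} {B : Ω → β} (h : Indep p A B) :
    Indep p B A := by
  intro b a
  rw [probEvent_congr' p (fun ω => and_comm), h a b, mul_comm]

lemma Indep.comp' {p : FinDist Ω} {A : Ω → α} {B : Ω → β} [Fintype β]
    (h : Indep p A B) (f : β → γ) : Indep p A (fun ω => f (B ω)) := by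
  have pf0 : ∀ (E : Ω → Prop), (∀ ω, ¬ E ω) → probEvent p E = 0 := fun E hE =>
    Finset.sum_eq_zero fun ω _ => by simp [hE ω]
  have key : ∀ (P : Ω → Prop) (c : γ),
      (∑ b : β, if f b = c then probEvent p (fun ω => P ω ∧ B ω = b) else 0)
      = probEvent p (fun ω => P ω ∧ f (B ω) = c) := by
    intro P c
    have step1 : (∑ b : β, if f b = c then probEvent p (fun ω => P ω ∧ B ω = b) else 0)
        = ∑ b : β, probEvent p (fun ω => (P ω ∧ B ω = b) ∧ f b = c) := by
      refine Finset.sum_congr rfl fun b _ => ?_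
      by_cases hb : f b = c
      · rw [if_pos hb]
        exact probEvent_congr' p fun ω => by simp [hb]
      · rw [if_neg hb]
        exact (pf0 _ fun ω h' => hb h'.2).symm
    rw [step1]
    unfold probEvent
    rw [Finset.sum_comm]
    refine Finset.sum_congr rfl fun ω _ => ?_
    rw [Finset.sum_eq_single (B ω)]
    · by_cases h1 : P ω <;> simp [h1]
    · intro b _ hb
      simp [Ne.symm hb]
    · intro h'; exact absurd (Finset.mem_univ _) h'
  intro a c
  have h1 : probEvent p (fun ω => A ω = a ∧ f (B ω) = c)
      = ∑ b : β, if f b = c then probEvent p (fun ω => A ω = a ∧ B ω = b) else 0 :=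
    (key (fun ω => A ω = a) c).symm
  have h2 : probVal p (fun ω => f (B ω)) c
      = ∑ b : β, if f b = c then probVal p B b else 0 := by
    have e1 : probVal p (fun ω => f (B ω)) c
        = probEvent p (fun ω => True ∧ f (B ω) = c) :=
      probEvent_congr' p fun ω => by simp
    rw [e1, ← key (fun _ => True) c]
    refine Finset.sum_congr rfl fun b _ => ?_
    by_cases hb : f b = c
    · rw [if_pos hb, if_pos hb]
      exact probEvent_congr' p fun ω => by simp
    · rw [if_neg hb, if_neg hb]
  rw [h1, h2, Finset.mul_sum]
  refine Finset.sum_congr rfl fun b _ => ?_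
  rw [h a b]
  by_cases hb : f b = c <;> simp [hb]

/-- Independence gives additivity of entropy. -/
lemma Indep.entropy_pair {p : FinDist Ω} {A : Ω → α} {B : Ω → β} (h : Indep p A B) :
    entropy p (fun ω => (A ω, B ω)) = entropy p A + entropy p B := by
  have hq : ∀ a b, probVal p (fun ω => (A ω, B ω)) (a, b)
      = probVal p A a * probVal p B b := by
    intro a b
    rw [← h a b]
    apply probEvent_congr'
    intro ω
    show (A ω, B ω) = (a, b) ↔ _
    exact Iff.of_eq (Prod.mk.injEq _ _ _ _)
  unfold entropy
  set iA := Finset.univ.image A with hiA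
  set iB := Finset.univ.image B with hiB
  have hAsum : ∑ a ∈ iA, probVal p A a = 1 := by rw [hiA]; exact sum_probVal p A
  have hBsum : ∑ b ∈ iB, probVal p B b = 1 := by rw [hiB]; exact sum_probVal p B
  have main : ∑ x ∈ iA ×ˢ iB,
      -(probVal p (fun ω => (A ω, B ω)) x
        * Real.logb 2 (probVal p (fun ω => (A ω, B ω)) x))
      = (∑ a ∈ iA, -(probVal p A a * Real.logb 2 (probVal p A a)))
        + ∑ b ∈ iB, -(probVal p B b * Real.logb 2 (probVal p B b)) := by
    rw [Finset.sum_product]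
    have hsplit : ∀ a b,
        -(probVal p (fun ω => (A ω, B ω)) (a, b)
          * Real.logb 2 (probVal p (fun ω => (A ω, B ω)) (a, b)))
        = probVal p B b * -(probVal p A a * Real.logb 2 (probVal p A a))
          + probVal p A a * -(probVal p B b * Real.logb 2 (probVal p B b)) := by
      intro a b
      rw [hq a b]
      rcases eq_or_ne (probVal p A a) 0 with ha | ha
      · simp [ha]
      rcases eq_or_ne (probVal p B b) 0 with hb | hb
      · simp [hb]
      rw [Real.logb_mul ha hb]
      ring
    calc ∑ a ∈ iA, ∑ b ∈ iB,
        -(probVal p (fun ω => (A ω, B ω)) (a, b)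
          * Real.logb 2 (probVal p (fun ω => (A ω, B ω)) (a, b)))
        = ∑ a ∈ iA, ((∑ b ∈ iB, probVal p B b)
              * -(probVal p A a * Real.logb 2 (probVal p A a))
            + probVal p A a
              * ∑ b ∈ iB, -(probVal p B b * Real.logb 2 (probVal p B b))) := by
          refine Finset.sum_congr rfl fun a _ => ?_
          simp_rw [hsplit a]
          rw [Finset.sum_add_distrib, ← Finset.sum_mul, ← Finset.mul_sum]
      _ = _ := by
          rw [hBsum]
          simp_rw [one_mul]
          rw [Finset.sum_add_distrib, ← Finset.sum_mul, hAsum, one_mul]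
  rw [← main]
  apply Finset.sum_subset
  · intro x hx
    simp only [Finset.mem_image] at hx
    obtain ⟨ω₀, _, hω₀⟩ := hx
    rw [Finset.mem_product, ← hω₀]
    exact ⟨Finset.mem_image.mpr ⟨ω₀, Finset.mem_univ _, rfl⟩,
      Finset.mem_image.mpr ⟨ω₀, Finset.mem_univ _, rfl⟩⟩
  · intro x _ hx
    simp only [Finset.mem_image] at hx
    push_neg at hx
    have hz : probVal p (fun ω => (A ω, B ω)) x = 0 := by
      unfold probVal probEvent
      refine Finset.sum_eq_zero fun ω _ => ?_
      have hne : ¬ ((A ω, B ω) = x) := hx ω (Finset.mem_univ ω)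
      simp [hne]
    rw [hz]
    simp

end FinDist

end AuxIL

/-- Chain-rule identity for the information leakage of SMP-type
random variables. -/
theorem il_chain_identity (Ω 𝒳 𝒴 𝒜 ℬ ℛ₁ ℛ₂ : Type)
    [Fintype Ω] [Fintype 𝒳] [Fintype 𝒴] [Fintype 𝒜] [Fintype ℬ] [Fintype ℛ₁] [Fintype ℛ₂]
    (μ : FinDist Ω)
    (Xv : Ω → 𝒳) (Yv : Ω → 𝒴) (MAv : Ω → 𝒜) (MBv : Ω → ℬ) (RACv : Ω → ℛ₁) (RBCv : Ω → ℛ₂)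
    (hindep1 : FinDist.Indep μ RBCv (fun ω => (Xv ω, MAv ω, RACv ω)))
    (hindep2 : FinDist.Indep μ RACv (fun ω => (Yv ω, MBv ω, RBCv ω)))
    (hmarkov1 : FinDist.condMutualInfo μ Yv MAv (fun ω => (Xv ω, RACv ω, RBCv ω)) = 0)
    (hmarkov2 : FinDist.condMutualInfo μ Xv MBv (fun ω => (Yv ω, MAv ω, RACv ω, RBCv ω)) = 0)
    (hmarkov3 : FinDist.condMutualInfo μ MAv MBv (fun ω => (Yv ω, RACv ω, RBCv ω)) = 0) :
    FinDist.condMutualInfo μ (fun ω => (Xv ω, Yv ω)) (fun ω => (MAv ω, MBv ω))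
        (fun ω => (RACv ω, RBCv ω))
      = FinDist.condMutualInfo μ Xv MAv RACv + FinDist.condMutualInfo μ Yv MBv RBCv
        - FinDist.condMutualInfo μ MAv MBv (fun ω => (RACv ω, RBCv ω)) := by
  have hrec : ∀ {α β : Type} [Fintype α] [Fintype β] (A : Ω → α) (B : Ω → β)
      (f : α → β) (g : β → α), (∀ ω, f (A ω) = B ω) → (∀ ω, g (B ω) = A ω) →
      FinDist.entropy μ A = FinDist.entropy μ B := fun A B f g hf hg =>
    FinDist.entropy_eq_of_maps μ A B f g hf hg
  simp only [FinDist.condMutualInfo] at hmarkov1 hmarkov2 hmarkov3 ⊢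
  -- recode markov hypotheses to canonical variable order X, Y, MA, MB, RAC, RBC
  have m1a : FinDist.entropy μ (fun ω => (Yv ω, Xv ω, RACv ω, RBCv ω))
      = FinDist.entropy μ (fun ω => (Xv ω, Yv ω, RACv ω, RBCv ω)) :=
    hrec _ _ (fun t => (t.2.1, t.1, t.2.2)) (fun t => (t.2.1, t.1, t.2.2))
      (fun _ => rfl) (fun _ => rfl)
  have m1b : FinDist.entropy μ (fun ω => (MAv ω, Xv ω, RACv ω, RBCv ω))
      = FinDist.entropy μ (fun ω => (Xv ω, MAv ω, RACv ω, RBCv ω)) :=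
    hrec _ _ (fun t => (t.2.1, t.1, t.2.2)) (fun t => (t.2.1, t.1, t.2.2))
      (fun _ => rfl) (fun _ => rfl)
  have m1c : FinDist.entropy μ (fun ω => (Yv ω, MAv ω, Xv ω, RACv ω, RBCv ω))
      = FinDist.entropy μ (fun ω => (Xv ω, Yv ω, MAv ω, RACv ω, RBCv ω)) :=
    hrec _ _ (fun t => (t.2.2.1, t.1, t.2.1, t.2.2.2))
      (fun t => (t.2.1, t.2.2.1, t.1, t.2.2.2)) (fun _ => rfl) (fun _ => rfl)
  rw [m1a, m1b, m1c] at hmarkov1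
  have m2b : FinDist.entropy μ (fun ω => (MBv ω, Yv ω, MAv ω, RACv ω, RBCv ω))
      = FinDist.entropy μ (fun ω => (Yv ω, MAv ω, MBv ω, RACv ω, RBCv ω)) :=
    hrec _ _ (fun t => (t.2.1, t.2.2.1, t.1, t.2.2.2))
      (fun t => (t.2.2.1, t.1, t.2.1, t.2.2.2)) (fun _ => rfl) (fun _ => rfl)
  have m2c : FinDist.entropy μ (fun ω => (Xv ω, MBv ω, Yv ω, MAv ω, RACv ω, RBCv ω))
      = FinDist.entropy μ (fun ω => (Xv ω, Yv ω, MAv ω, MBv ω, RACv ω, RBCv ω)) :=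
    hrec _ _ (fun t => (t.1, t.2.2.1, t.2.2.2.1, t.2.1, t.2.2.2.2))
      (fun t => (t.1, t.2.2.2.1, t.2.1, t.2.2.1, t.2.2.2.2)) (fun _ => rfl) (fun _ => rfl)
  rw [m2b, m2c] at hmarkov2
  have m3a : FinDist.entropy μ (fun ω => (MAv ω, Yv ω, RACv ω, RBCv ω))
      = FinDist.entropy μ (fun ω => (Yv ω, MAv ω, RACv ω, RBCv ω)) :=
    hrec _ _ (fun t => (t.2.1, t.1, t.2.2)) (fun t => (t.2.1, t.1, t.2.2))
      (fun _ => rfl) (fun _ => rfl)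
  have m3b : FinDist.entropy μ (fun ω => (MBv ω, Yv ω, RACv ω, RBCv ω))
      = FinDist.entropy μ (fun ω => (Yv ω, MBv ω, RACv ω, RBCv ω)) :=
    hrec _ _ (fun t => (t.2.1, t.1, t.2.2)) (fun t => (t.2.1, t.1, t.2.2))
      (fun _ => rfl) (fun _ => rfl)
  have m3c : FinDist.entropy μ (fun ω => (MAv ω, MBv ω, Yv ω, RACv ω, RBCv ω))
      = FinDist.entropy μ (fun ω => (Yv ω, MAv ω, MBv ω, RACv ω, RBCv ω)) :=
    hrec _ _ (fun t => (t.2.2.1, t.1, t.2.1, t.2.2.2))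
      (fun t => (t.2.1, t.2.2.1, t.1, t.2.2.2)) (fun _ => rfl) (fun _ => rfl)
  rw [m3a, m3b, m3c] at hmarkov3
  -- recode goal LHS terms
  have g1 : FinDist.entropy μ (fun ω => ((Xv ω, Yv ω), (RACv ω, RBCv ω)))
      = FinDist.entropy μ (fun ω => (Xv ω, Yv ω, RACv ω, RBCv ω)) :=
    hrec _ _ (fun t => (t.1.1, t.1.2, t.2)) (fun t => ((t.1, t.2.1), t.2.2))
      (fun _ => rfl) (fun _ => rfl)
  have g2 : FinDist.entropy μ (fun ω => ((MAv ω, MBv ω), (RACv ω, RBCv ω)))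
      = FinDist.entropy μ (fun ω => (MAv ω, MBv ω, RACv ω, RBCv ω)) :=
    hrec _ _ (fun t => (t.1.1, t.1.2, t.2)) (fun t => ((t.1, t.2.1), t.2.2))
      (fun _ => rfl) (fun _ => rfl)
  have g3 : FinDist.entropy μ (fun ω => ((Xv ω, Yv ω), (MAv ω, MBv ω), (RACv ω, RBCv ω)))
      = FinDist.entropy μ (fun ω => (Xv ω, Yv ω, MAv ω, MBv ω, RACv ω, RBCv ω)) :=
    hrec _ _ (fun t => (t.1.1, t.1.2, t.2.1.1, t.2.1.2, t.2.2))
      (fun t => ((t.1, t.2.1), (t.2.2.1, t.2.2.2.1), t.2.2.2.2))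
      (fun _ => rfl) (fun _ => rfl)
  rw [g1, g2, g3]
  -- consequences of independence
  have ia : FinDist.entropy μ (fun ω => (Xv ω, MAv ω, RACv ω, RBCv ω))
      = FinDist.entropy μ (fun ω => (Xv ω, MAv ω, RACv ω)) + FinDist.entropy μ RBCv :=
    (hrec _ (fun ω => ((Xv ω, MAv ω, RACv ω), RBCv ω))
      (fun t => ((t.1, t.2.1, t.2.2.1), t.2.2.2)) (fun t => (t.1.1, t.1.2.1, t.1.2.2, t.2))
      (fun _ => rfl) (fun _ => rfl)).trans
      (FinDist.Indep.entropy_pair (FinDist.Indep.symm' hindep1))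
  have hi2 : FinDist.Indep μ RBCv (fun ω => (Xv ω, RACv ω)) :=
    FinDist.Indep.comp' hindep1 (fun t => (t.1, t.2.2))
  have ib : FinDist.entropy μ (fun ω => (Xv ω, RACv ω, RBCv ω))
      = FinDist.entropy μ (fun ω => (Xv ω, RACv ω)) + FinDist.entropy μ RBCv :=
    (hrec _ (fun ω => ((Xv ω, RACv ω), RBCv ω))
      (fun t => ((t.1, t.2.1), t.2.2)) (fun t => (t.1.1, t.1.2, t.2))
      (fun _ => rfl) (fun _ => rfl)).trans
      (FinDist.Indep.entropy_pair (FinDist.Indep.symm' hi2))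
  have hi3 : FinDist.Indep μ RBCv (fun ω => (MAv ω, RACv ω)) :=
    FinDist.Indep.comp' hindep1 (fun t => t.2)
  have ic : FinDist.entropy μ (fun ω => (MAv ω, RACv ω, RBCv ω))
      = FinDist.entropy μ (fun ω => (MAv ω, RACv ω)) + FinDist.entropy μ RBCv :=
    (hrec _ (fun ω => ((MAv ω, RACv ω), RBCv ω))
      (fun t => ((t.1, t.2.1), t.2.2)) (fun t => (t.1.1, t.1.2, t.2))
      (fun _ => rfl) (fun _ => rfl)).trans
      (FinDist.Indep.entropy_pair (FinDist.Indep.symm' hi3))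
  have hi4 : FinDist.Indep μ RBCv RACv := FinDist.Indep.comp' hindep1 (fun t => t.2.2)
  have id1 : FinDist.entropy μ (fun ω => (RACv ω, RBCv ω))
      = FinDist.entropy μ RACv + FinDist.entropy μ RBCv :=
    FinDist.Indep.entropy_pair (FinDist.Indep.symm' hi4)
  have ie : FinDist.entropy μ (fun ω => (Yv ω, MBv ω, RACv ω, RBCv ω))
      = FinDist.entropy μ (fun ω => (Yv ω, MBv ω, RBCv ω)) + FinDist.entropy μ RACv :=
    (hrec _ (fun ω => ((Yv ω, MBv ω, RBCv ω), RACv ω))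
      (fun t => ((t.1, t.2.1, t.2.2.2), t.2.2.1)) (fun t => (t.1.1, t.1.2.1, t.2, t.1.2.2))
      (fun _ => rfl) (fun _ => rfl)).trans
      (FinDist.Indep.entropy_pair (FinDist.Indep.symm' hindep2))
  have hi5 : FinDist.Indep μ RACv (fun ω => (Yv ω, RBCv ω)) :=
    FinDist.Indep.comp' hindep2 (fun t => (t.1, t.2.2))
  have if1 : FinDist.entropy μ (fun ω => (Yv ω, RACv ω, RBCv ω))
      = FinDist.entropy μ (fun ω => (Yv ω, RBCv ω)) + FinDist.entropy μ RACv :=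
    (hrec _ (fun ω => ((Yv ω, RBCv ω), RACv ω))
      (fun t => ((t.1, t.2.2), t.2.1)) (fun t => (t.1.1, t.2, t.1.2))
      (fun _ => rfl) (fun _ => rfl)).trans
      (FinDist.Indep.entropy_pair (FinDist.Indep.symm' hi5))
  have hi6 : FinDist.Indep μ RACv (fun ω => (MBv ω, RBCv ω)) :=
    FinDist.Indep.comp' hindep2 (fun t => t.2)
  have ig : FinDist.entropy μ (fun ω => (MBv ω, RACv ω, RBCv ω))
      = FinDist.entropy μ (fun ω => (MBv ω, RBCv ω)) + FinDist.entropy μ RACv :=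
    (hrec _ (fun ω => ((MBv ω, RBCv ω), RACv ω))
      (fun t => ((t.1, t.2.2), t.2.1)) (fun t => (t.1.1, t.2, t.1.2))
      (fun _ => rfl) (fun _ => rfl)).trans
      (FinDist.Indep.entropy_pair (FinDist.Indep.symm' hi6))
  linarith [hmarkov1, hmarkov2, hmarkov3, ia, ib, ic, id1, ie, if1, ig]
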